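/- The finiteness parameter of the Apollonian system equals 1/2: the infimum of the set of t ≥ 0 for which the series Σ_{(k,n)∈I} ‖φ'_{k,n}‖_∞^t converges is equal to 1/2 (equivalently, the series converges for every t > 1/2 and diverges for every 0 ≤ t ≤ 1/2). -/

import Mathlib

open Complex Metric Set
open scoped ENNReal

noncomputable section

/-- λ = √3 -/
def lam : ℝ := Real.sqrt 3

/-- The Möbius map f(z) = ((λ−1)z+1)/(−z+λ+1). -/
def apolF : ℂ → ℂ := fun z => (((lam : ℂ) - 1) * z + 1) / (-z + (lam : ℂ) + 1)

/-- Rotation by angle θ. -/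
def Rot (θ : ℝ) : ℂ → ℂ := fun z => Complex.exp ((θ : ℂ) * Complex.I) * z

/-- θ_k = (−1)^k · 2π/3 -/
def thetaA (k : ℕ) : ℝ := (-1 : ℝ) ^ k * (2 * Real.pi / 3)

/-- θ'_k = 2πk/3 -/
def thetaB (k : ℕ) : ℝ := 2 * Real.pi * k / 3

/-- The Apollonian generators φ_{k,n} = R_{θ'_k} ∘ f^n ∘ R_{θ_k} ∘ f. -/
def phi (k n : ℕ) : ℂ → ℂ := Rot (thetaB k) ∘ (apolF^[n]) ∘ Rot (thetaA k) ∘ apolF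

/-- The closed unit disk 𝔻. -/
def unitD : Set ℂ := Metric.closedBall (0 : ℂ) 1

/-- The Apollonian alphabet I = {1,…,6} × {1,2,3,…}. -/
def apolI : Set (ℕ × ℕ) := {p | 1 ≤ p.1 ∧ p.1 ≤ 6 ∧ 1 ≤ p.2}

/-- ‖φ'_{k,n}‖_∞ = max over the closed unit disk of |φ'_{k,n}|. -/
def Dnorm (k n : ℕ) : ℝ := sSup ((fun z => ‖deriv (phi k n) z‖) '' unitD)

-- ========== auxiliary lemmas ==========

lemma lam_sq : lam ^ 2 = 3 := Real.sq_sqrt (by norm_num)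
lemma lam_lb : (173:ℝ)/100 < lam := by
  have h : ((173:ℝ)/100)^2 < 3 := by norm_num
  exact (Real.lt_sqrt (by norm_num)).2 h
lemma lam_pos : (0:ℝ) < lam := by nlinarith [lam_lb]
lemma lam_ub : lam < (174:ℝ)/100 := by
  have h : (3:ℝ) < ((174:ℝ)/100)^2 := by norm_num
  exact (Real.sqrt_lt' (by norm_num)).2 h
lemma lamC_sq : (lam : ℂ) ^ 2 = 3 := by
  rw [← Complex.ofReal_pow, lam_sq]; norm_num
lemma lamC_ne : (lam : ℂ) ≠ 0 := Complex.ofReal_ne_zero.2 lam_pos.ne'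

lemma mem_unitD {z : ℂ} : z ∈ unitD ↔ ‖z‖ ≤ 1 := by
  simp [unitD, Metric.mem_closedBall, Complex.dist_eq]

lemma denom1_lb {z : ℂ} (hz : z ∈ unitD) : lam ≤ ‖-z + (lam:ℂ) + 1‖ := by
  rw [mem_unitD] at hz
  have h : -z + (lam:ℂ) + 1 = ((lam:ℂ) + 1) - z := by ring
  rw [h]
  have h2 : ‖(lam:ℂ)+1‖ - ‖z‖ ≤ ‖((lam:ℂ)+1) - z‖ := by
    simpa using norm_sub_norm_le ((lam:ℂ)+1) z
  have h3 : ‖(lam:ℂ)+1‖ = lam + 1 := by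
    rw [show (lam:ℂ)+1 = ((lam+1 : ℝ):ℂ) by push_cast; ring]
    rw [Complex.norm_real, Real.norm_eq_abs]
    rw [_root_.abs_of_nonneg (by nlinarith [lam_lb])]
  linarith

lemma denom1_ne {z : ℂ} (hz : z ∈ unitD) : -z + (lam:ℂ) + 1 ≠ 0 := by
  intro h
  have := denom1_lb hz
  rw [h] at this
  simp at this
  nlinarith [lam_lb]

lemma denomn_lb {n : ℕ} {z : ℂ} (hz : z ∈ unitD) :
    lam ≤ ‖((lam:ℂ) + n) - n * z‖ := by
  rw [mem_unitD] at hz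
  have h2 : ‖(lam:ℂ)+n‖ - ‖(n:ℂ) * z‖ ≤ ‖((lam:ℂ)+n) - n*z‖ := by
    simpa using norm_sub_norm_le ((lam:ℂ)+n) ((n:ℂ)*z)
  have h3 : ‖(lam:ℂ)+n‖ = lam + n := by
    rw [show (lam:ℂ)+n = ((lam+n : ℝ):ℂ) by push_cast; ring]
    rw [Complex.norm_real, Real.norm_eq_abs, _root_.abs_of_nonneg (add_nonneg lam_pos.le (Nat.cast_nonneg n))]
  have h4 : ‖(n:ℂ) * z‖ ≤ n := by
    rw [norm_mul]
    calc ‖(n:ℂ)‖ * ‖z‖ ≤ ‖(n:ℂ)‖ * 1 := by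
          apply mul_le_mul_of_nonneg_left hz (norm_nonneg _)
      _ = n := by simp
  linarith

lemma denomn_ne {n : ℕ} {z : ℂ} (hz : z ∈ unitD) : ((lam:ℂ) + n) - n * z ≠ 0 := by
  intro h
  have := denomn_lb (n := n) hz
  rw [h] at this
  simp at this
  nlinarith [lam_lb]
lemma apolF_maps {z : ℂ} (hz : z ∈ unitD) : apolF z ∈ unitD := by
  rw [mem_unitD] at hz ⊢
  rw [apolF, norm_div]
  rw [div_le_one (by nlinarith [denom1_lb (mem_unitD.2 hz), lam_pos])]
  have key : Complex.normSq (((lam:ℂ)-1)*z+1) ≤ Complex.normSq (-z + (lam:ℂ) + 1) := by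
    simp only [Complex.normSq_apply, Complex.add_re, Complex.add_im, Complex.mul_re,
      Complex.mul_im, Complex.sub_re, Complex.sub_im, Complex.neg_re, Complex.neg_im,
      Complex.one_re, Complex.one_im, Complex.ofReal_re, Complex.ofReal_im]
    have h1 : z.re^2 + z.im^2 ≤ 1 := by
      have := Complex.sq_norm z
      rw [Complex.normSq_apply] at this
      nlinarith [hz, norm_nonneg z]
    have h2 : z.re ≤ 1 := by nlinarith [sq_nonneg z.im, sq_nonneg (z.re - 1)]
    nlinarith [lam_sq, lam_lb, lam_ub,
      mul_nonneg (by nlinarith [lam_lb] : (0:ℝ) ≤ 2*lam - 3) (sq_nonneg z.im),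
      mul_nonneg (by linarith : (0:ℝ) ≤ 1 - z.re)
        (by nlinarith [lam_lb] : (0:ℝ) ≤ (3 + 2*lam) - (2*lam-3)*z.re)]
  rw [Complex.norm_def, Complex.norm_def]
  exact Real.sqrt_le_sqrt key

lemma hasDerivAt_apolF {z : ℂ} (hz : z ∈ unitD) :
    HasDerivAt apolF (3 / (-z + (lam:ℂ) + 1)^2) z := by
  have hN : HasDerivAt (fun w : ℂ => ((lam:ℂ)-1)*w + 1) ((lam:ℂ)-1) z := by
    simpa using ((hasDerivAt_id z).const_mul ((lam:ℂ)-1)).add_const 1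
  have hD : HasDerivAt (fun w : ℂ => -w + (lam:ℂ) + 1) (-1) z := by
    simpa using (((hasDerivAt_id z).neg).add_const ((lam:ℂ))).add_const 1
  have h := hN.div hD (denom1_ne hz)
  have h3 : (((lam:ℂ) - 1) * (-z + ↑lam + 1) - (((lam:ℂ) - 1) * z + 1) * -1) = 3 := by
    linear_combination lamC_sq
  rw [h3] at h
  exact h

lemma iter_key (n : ℕ) : ∀ z ∈ unitD,
    apolF^[n] z = (((lam:ℂ) - n) * z + n) / (((lam:ℂ) + n) - n * z) ∧
    HasDerivAt (apolF^[n]) (3 / (((lam:ℂ) + n) - n * z)^2) z := by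
  induction n with
  | zero =>
    intro z hz
    constructor
    · simp only [Function.iterate_zero, id_eq, Nat.cast_zero]
      rw [show (lam:ℂ) - 0 = (lam:ℂ) by ring, show (lam:ℂ) + 0 - 0*z = (lam:ℂ) by ring]
      rw [mul_comm, add_zero]
      exact (mul_div_cancel_right₀ z lamC_ne).symm
    · have h0 : (3 : ℂ) / (((lam:ℂ) + (0:ℕ)) - (0:ℕ) * z)^2 = 1 := by
        push_cast
        rw [show (lam:ℂ) + 0 - 0 * z = (lam:ℂ) by ring, lamC_sq]
        norm_num
      rw [h0]
      simpa using hasDerivAt_id z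
  | succ n ih =>
    intro z hz
    have hfz := apolF_maps hz
    obtain ⟨hval, hder⟩ := ih (apolF z) hfz
    have hD := denom1_ne hz
    have hDn := denomn_ne (n := n) hfz
    have hDn1 := denomn_ne (n := n+1) hz
    have hQ : ((lam:ℂ) + ((n:ℂ)+1)) - ((n:ℂ)+1) * z ≠ 0 := by
      push_cast at hDn1; exact hDn1
    have hkey : ((lam:ℂ) + n) - n * apolF z =
        (lam:ℂ) * (((lam:ℂ) + ((n:ℂ)+1)) - ((n:ℂ)+1) * z) / (-z + (lam:ℂ) + 1) := by
      rw [apolF]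
      field_simp
      ring
    constructor
    · rw [Function.iterate_succ_apply, hval, hkey, apolF]
      push_cast
      rw [div_eq_div_iff (by
          exact div_ne_zero (mul_ne_zero lamC_ne hQ) hD) hQ]
      field_simp
      ring
    · rw [Function.iterate_succ]
      have hcomp := hder.comp z (hasDerivAt_apolF hz)
      have hval2 : 3 / (((lam:ℂ) + n) - n * apolF z)^2 * (3 / (-z + (lam:ℂ) + 1)^2) =
          3 / (((lam:ℂ) + ((n:ℂ)+1)) - ((n:ℂ)+1) * z)^2 := by
        rw [hkey]
        rw [div_pow, mul_pow]
        rw [div_div_eq_mul_div]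
        rw [div_mul_div_comm]
        rw [lamC_sq]
        rw [show (3:ℂ) * (-z + (lam:ℂ) + 1)^2 * 3 = 9 * (-z + (lam:ℂ)+1)^2 by ring]
        rw [show (3:ℂ) * ((((lam:ℂ) + ((n:ℂ)+1)) - ((n:ℂ)+1) * z)^2) * ((-z + (lam:ℂ) + 1)^2)
            = (3 * (((lam:ℂ) + ((n:ℂ)+1)) - ((n:ℂ)+1) * z)^2) * ((-z + (lam:ℂ)+1)^2) by ring]
        rw [mul_div_mul_right _ _ (pow_ne_zero 2 hD)]
        rw [div_eq_div_iff (by exact mul_ne_zero three_ne_zero (pow_ne_zero 2 hQ)) (pow_ne_zero 2 hQ)]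
        ring
      rw [show ((n:ℕ)+1 : ℕ) = n+1 from rfl]
      push_cast
      rw [← hval2]
      exact hcomp

/-- the coefficients of the combined Möbius denominator -/
def uA (k : ℕ) : ℂ := Complex.exp ((thetaA k : ℂ) * Complex.I)
def cc (k n : ℕ) : ℂ := -((n:ℂ) * uA k * ((lam:ℂ) - 1)) - ((lam:ℂ) + n)
def dd (k n : ℕ) : ℂ := ((lam:ℂ) + n) * ((lam:ℂ) + 1) - (n:ℂ) * uA k

lemma uA_abs (k : ℕ) : ‖uA k‖ = 1 := by
  simpa [uA] using Complex.norm_exp_ofReal_mul_I (thetaA k)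

lemma Rot_maps {θ : ℝ} {z : ℂ} (hz : z ∈ unitD) : Rot θ z ∈ unitD := by
  rw [mem_unitD] at hz ⊢
  rw [Rot, norm_mul]
  simpa [Complex.norm_exp_ofReal_mul_I] using hz

lemma hasDerivAt_Rot (θ : ℝ) (w : ℂ) :
    HasDerivAt (Rot θ) (Complex.exp ((θ:ℂ) * Complex.I)) w := by
  have h := (hasDerivAt_id' w).const_mul (Complex.exp ((θ:ℂ) * Complex.I))
  rw [mul_one] at h
  exact h

lemma phi_hasDerivAt (k n : ℕ) {z : ℂ} (hz : z ∈ unitD) :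
    HasDerivAt (phi k n)
      (Complex.exp ((thetaB k : ℂ) * Complex.I) *
        (3 / (((lam:ℂ) + n) - n * (uA k * apolF z))^2 *
          (uA k * (3 / (-z + (lam:ℂ) + 1)^2)))) z := by
  have hfz := apolF_maps hz
  have hw : Rot (thetaA k) (apolF z) ∈ unitD := Rot_maps hfz
  have h1 : HasDerivAt (Rot (thetaA k) ∘ apolF) (uA k * (3 / (-z + (lam:ℂ) + 1)^2)) z :=
    (hasDerivAt_Rot (thetaA k) (apolF z)).comp z (hasDerivAt_apolF hz)
  have h2 := ((iter_key n) _ hw).2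
  have h3 : HasDerivAt (apolF^[n] ∘ (Rot (thetaA k) ∘ apolF))
      (3 / (((lam:ℂ) + n) - n * (uA k * apolF z))^2 * (uA k * (3 / (-z + (lam:ℂ) + 1)^2))) z := by
    have := h2.comp z h1
    simpa [Rot, uA] using this
  have h4 := (hasDerivAt_Rot (thetaB k) ((apolF^[n] ∘ (Rot (thetaA k) ∘ apolF)) z)).comp z h3
  exact h4

lemma phi_deriv_abs (k n : ℕ) {z : ℂ} (hz : z ∈ unitD) :
    ‖deriv (phi k n) z‖ = 9 / (‖cc k n * z + dd k n‖)^2 := by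
  have hD := denom1_ne hz
  have hfz := apolF_maps hz
  have hw : uA k * apolF z ∈ unitD := by
    rw [mem_unitD] at hfz ⊢
    rw [norm_mul, uA_abs, one_mul]; exact hfz
  have hDn : ((lam:ℂ) + n) - n * (uA k * apolF z) ≠ 0 := denomn_ne hw
  have hder := (phi_hasDerivAt k n hz).deriv
  rw [hder]
  have hprod : (((lam:ℂ) + n) - n * (uA k * apolF z)) * (-z + (lam:ℂ) + 1) =
      cc k n * z + dd k n := by
    rw [apolF, cc, dd]
    field_simp
    ring
  rw [norm_mul, norm_mul, norm_mul, norm_div, norm_div, Complex.norm_exp_ofReal_mul_I]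
  rw [show ‖uA k‖ = 1 from uA_abs k]
  rw [← hprod, norm_mul, norm_pow, norm_pow]
  have hA : ‖((lam:ℂ) + n) - n * (uA k * apolF z)‖ ≠ 0 := by
    rwa [ne_eq, norm_eq_zero]
  have hB : ‖-z + (lam:ℂ) + 1‖ ≠ 0 := by
    rwa [ne_eq, norm_eq_zero]
  rw [mul_pow]
  field_simp
  rw [show ‖(3:ℂ)‖ = 3 by norm_num]
  ring

lemma uA_re (k : ℕ) : (uA k).re = -(1/2) := by
  rw [uA, show ((thetaA k : ℝ) : ℂ) * Complex.I = ((thetaA k : ℝ) : ℂ) * Complex.I from rfl]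
  rw [Complex.exp_ofReal_mul_I_re]
  rw [thetaA]
  rcases Nat.even_or_odd k with hk | hk
  · rw [hk.neg_one_pow, one_mul]
    rw [show 2 * Real.pi / 3 = Real.pi - Real.pi/3 by ring, Real.cos_pi_sub, Real.cos_pi_div_three]
  · rw [hk.neg_one_pow, neg_one_mul, Real.cos_neg]
    rw [show 2 * Real.pi / 3 = Real.pi - Real.pi/3 by ring, Real.cos_pi_sub, Real.cos_pi_div_three]

lemma uA_sq (k : ℕ) : (uA k).re^2 + (uA k).im^2 = 1 := by
  have h := Complex.sq_norm (uA k)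
  rw [uA_abs, Complex.normSq_apply] at h
  nlinarith [h]

lemma cc_normSq (k n : ℕ) : Complex.normSq (cc k n) =
    ((n:ℝ)*(lam-1))^2 + ((lam:ℝ)+n)^2 - ((n:ℝ)*(lam-1))*((lam:ℝ)+n) := by
  have h1 := uA_re k
  have h2 := uA_sq k
  simp only [cc, Complex.normSq_apply, Complex.sub_re, Complex.sub_im, Complex.neg_re,
    Complex.neg_im, Complex.mul_re, Complex.mul_im, Complex.add_re, Complex.add_im,
    Complex.ofReal_re, Complex.ofReal_im, Complex.natCast_re, Complex.natCast_im,
    Complex.one_re, Complex.one_im]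
  have him2 : (uA k).im^2 = 3/4 := by nlinarith [h1, h2]
  ring_nf
  rw [h1, him2]
  ring

lemma dd_normSq (k n : ℕ) : Complex.normSq (dd k n) =
    (((lam:ℝ)+n)*((lam:ℝ)+1))^2 + (n:ℝ)^2 + (((lam:ℝ)+n)*((lam:ℝ)+1))*(n:ℝ) := by
  have h1 := uA_re k
  have h2 := uA_sq k
  simp only [dd, Complex.normSq_apply, Complex.sub_re, Complex.sub_im, Complex.neg_re,
    Complex.neg_im, Complex.mul_re, Complex.mul_im, Complex.add_re, Complex.add_im,
    Complex.ofReal_re, Complex.ofReal_im, Complex.natCast_re, Complex.natCast_im,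
    Complex.one_re, Complex.one_im]
  have him2 : (uA k).im^2 = 3/4 := by nlinarith [h1, h2]
  ring_nf
  rw [h1, him2]
  ring

-- abbreviations
lemma cc_abs_sq (k n : ℕ) : (‖cc k n‖)^2 =
    ((n:ℝ)*(lam-1))^2 + ((lam:ℝ)+n)^2 - ((n:ℝ)*(lam-1))*((lam:ℝ)+n) := by
  rw [Complex.sq_norm, cc_normSq]
lemma dd_abs_sq (k n : ℕ) : (‖dd k n‖)^2 =
    (((lam:ℝ)+n)*((lam:ℝ)+1))^2 + (n:ℝ)^2 + (((lam:ℝ)+n)*((lam:ℝ)+1))*(n:ℝ) := by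
  rw [Complex.sq_norm, dd_normSq]

lemma cc_abs_ub (k n : ℕ) : ‖cc k n‖ ≤ (9/10)*(n:ℝ) + 2 := by
  have h := cc_abs_sq k n
  have ha := norm_nonneg (cc k n)
  have hn := Nat.cast_nonneg (α := ℝ) n
  refine le_of_pow_le_pow_left₀ two_ne_zero (by positivity) ?_
  nlinarith [lam_sq, lam_lb, lam_ub]

lemma abs_lt' (k n : ℕ) : ‖cc k n‖ + 2*(n:ℝ) ≤ ‖dd k n‖ := by
  have hc := cc_abs_sq k n
  have hd := dd_abs_sq k n
  have ha := norm_nonneg (cc k n)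
  have hb := norm_nonneg (dd k n)
  have hub := cc_abs_ub k n
  have hn := Nat.cast_nonneg (α := ℝ) n
  have hsq : (‖cc k n‖ + 2*(n:ℝ))^2 ≤ (‖dd k n‖)^2 := by
    nlinarith [lam_sq, lam_lb, lam_ub]
  nlinarith [hsq]

lemma M_pos (k n : ℕ) : 0 < ‖dd k n‖ - ‖cc k n‖ := by
  have h := abs_lt' k n
  have hc := cc_abs_sq k n
  have hd := dd_abs_sq k n
  have ha := norm_nonneg (cc k n)
  have hb := norm_nonneg (dd k n)
  have hn := Nat.cast_nonneg (α := ℝ) n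
  -- strict: |d|^2 > |c|^2
  have hsq : (‖cc k n‖)^2 < (‖dd k n‖)^2 := by
    nlinarith [lam_sq, lam_lb, lam_ub]
  nlinarith [hsq]

lemma dd_abs_ub (k n : ℕ) (hn : 1 ≤ n) : ‖dd k n‖ ≤ 10*(n:ℝ) := by
  have hd := dd_abs_sq k n
  have hb := norm_nonneg (dd k n)
  have hn' : (1:ℝ) ≤ (n:ℝ) := by exact_mod_cast hn
  nlinarith [lam_sq, lam_lb, lam_ub, sq_nonneg (‖dd k n‖ - 10*(n:ℝ))]

lemma cc_ne (k n : ℕ) : cc k n ≠ 0 := by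
  intro h
  have := cc_abs_sq k n
  rw [h] at this
  simp at this
  nlinarith [lam_sq, lam_lb, lam_ub, Nat.cast_nonneg (α := ℝ) n, sq_nonneg ((n:ℝ)*(lam-1) - (lam+n))]

lemma dd_ne (k n : ℕ) : dd k n ≠ 0 := by
  intro h
  have h2 := M_pos k n
  rw [h] at h2
  simp at h2
  nlinarith [norm_nonneg (cc k n)]

lemma csSup_img (k n : ℕ) :
    sSup ((fun z => 9 / (‖cc k n * z + dd k n‖)^2) '' unitD) = 9 / (‖dd k n‖ - ‖cc k n‖)^2 := by
  set M := ‖dd k n‖ - ‖cc k n‖ with hM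
  have hMpos := M_pos k n
  have hca := norm_pos_iff.2 (cc_ne k n)
  have hda := norm_pos_iff.2 (dd_ne k n)
  have hc0 : ((‖cc k n‖ : ℝ) : ℂ) ≠ 0 := by exact_mod_cast hca.ne'
  have hd0 : ((‖dd k n‖ : ℝ) : ℂ) ≠ 0 := by exact_mod_cast hda.ne'
  have hgreat : IsGreatest ((fun z => 9 / (‖cc k n * z + dd k n‖)^2) '' unitD)
      (9 / M^2) := by
    constructor
    · refine ⟨-((starRingEnd ℂ) (cc k n) * dd k n) /
          (((‖cc k n‖ : ℝ) : ℂ) * ((‖dd k n‖ : ℝ) : ℂ)), ?_, ?_⟩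
      · rw [mem_unitD]
        rw [norm_div, norm_neg, norm_mul, norm_mul, Complex.norm_conj,
          Complex.norm_real, Real.norm_eq_abs, Complex.norm_real, Real.norm_eq_abs,
          _root_.abs_of_nonneg (norm_nonneg _), _root_.abs_of_nonneg (norm_nonneg _)]
        rw [div_le_one (mul_pos hca hda)]
      · have hmc2 : cc k n * (starRingEnd ℂ) (cc k n) =
            ((‖cc k n‖ : ℝ) : ℂ) * ((‖cc k n‖ : ℝ) : ℂ) := by
          rw [Complex.mul_conj]
          norm_cast
          rw [← Complex.sq_norm]
          ring
        have key : cc k n * (-((starRingEnd ℂ) (cc k n) * dd k n) /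
            (((‖cc k n‖ : ℝ) : ℂ) * ((‖dd k n‖ : ℝ) : ℂ))) + dd k n =
            dd k n * (((M / ‖dd k n‖ : ℝ)) : ℂ) := by
          rw [hM]
          push_cast
          field_simp
          linear_combination (-(dd k n)) * hmc2
        show 9 / (‖cc k n * (-((starRingEnd ℂ) (cc k n) * dd k n) /
            (((‖cc k n‖ : ℝ) : ℂ) * ((‖dd k n‖ : ℝ) : ℂ))) + dd k n‖)^2
            = 9 / M^2
        rw [key, norm_mul, Complex.norm_real, Real.norm_eq_abs,
          _root_.abs_of_nonneg (by positivity : (0:ℝ) ≤ M / ‖dd k n‖)]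
        rw [mul_div_cancel₀ _ hda.ne']
    · rintro x ⟨z, hz, rfl⟩
      have h1 : M ≤ ‖cc k n * z + dd k n‖ := by
        have h2 : ‖dd k n‖ ≤ ‖cc k n * z + dd k n‖ + ‖cc k n‖ := by
          calc ‖dd k n‖ = ‖(cc k n * z + dd k n) + (- (cc k n * z))‖ := by ring_nf
            _ ≤ ‖cc k n * z + dd k n‖ + ‖- (cc k n * z)‖ := norm_add_le _ _
            _ ≤ ‖cc k n * z + dd k n‖ + ‖cc k n‖ := by
                rw [norm_neg, norm_mul]
                have := mem_unitD.1 hz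
                nlinarith [norm_nonneg (cc k n), norm_nonneg z]
        linarith
      rw [div_le_div_iff₀ (pow_pos (lt_of_lt_of_le hMpos h1) 2) (pow_pos hMpos 2)]
      nlinarith [hMpos, h1]
  exact hgreat.csSup_eq


lemma Dnorm_eq (k n : ℕ) :
    Dnorm k n = 9 / (‖dd k n‖ - ‖cc k n‖)^2 := by
  have himg : ((fun z => ‖deriv (phi k n) z‖) '' unitD) =
      ((fun z => 9 / (‖cc k n * z + dd k n‖)^2) '' unitD) :=
    Set.image_congr (fun z hz => phi_deriv_abs k n hz)
  rw [Dnorm, himg]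
  exact csSup_img k n

lemma Dnorm_bounds (k n : ℕ) (hn : 1 ≤ n) :
    9/(100*(n:ℝ)^2) ≤ Dnorm k n ∧ Dnorm k n ≤ 9/(4*(n:ℝ)^2) := by
  rw [Dnorm_eq]
  have hnR : (1:ℝ) ≤ (n:ℝ) := by exact_mod_cast hn
  have hMpos := M_pos k n
  have h2n : 2*(n:ℝ) ≤ ‖dd k n‖ - ‖cc k n‖ := by
    have := abs_lt' k n
    linarith
  have h10 : ‖dd k n‖ - ‖cc k n‖ ≤ 10*(n:ℝ) := by
    have h1 := dd_abs_ub k n hn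
    have h2 := norm_nonneg (cc k n)
    linarith
  constructor
  · rw [div_le_div_iff₀ (by positivity) (pow_pos hMpos 2)]
    nlinarith [hMpos, h10, h2n]
  · rw [div_le_div_iff₀ (pow_pos hMpos 2) (by positivity)]
    nlinarith [hMpos, h10, h2n]

lemma inv_sq_rpow {x : ℝ} (hx : 0 < x) (t : ℝ) : ((x^2)⁻¹ : ℝ) ^ t = x ^ (-(2*t)) := by
  rw [← Real.rpow_natCast x 2, ← Real.rpow_neg hx.le, ← Real.rpow_mul hx.le]
  congr 1
  push_cast
  ring

/-- injection ℕ → apolI used in the divergence proof -/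
def apolIota : ℕ → apolI := fun m =>
  ⟨(1, m+1), ⟨le_refl 1, by norm_num, Nat.succ_le_succ (Nat.zero_le m)⟩⟩


/-- The finiteness parameter of the Apollonian system equals 1/2: the series
Σ_{(k,n)∈I} ‖φ'_{k,n}‖_∞^t converges for every t > 1/2 and diverges for 0 ≤ t ≤ 1/2. -/
theorem apollonian_finiteness_parameter :
    (∀ t : ℝ, 1 / 2 < t →
      Summable (fun p : apolI => Dnorm (p : ℕ × ℕ).1 (p : ℕ × ℕ).2 ^ t)) ∧
    (∀ t : ℝ, 0 ≤ t → t ≤ 1 / 2 →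
      ¬ Summable (fun p : apolI => Dnorm (p : ℕ × ℕ).1 (p : ℕ × ℕ).2 ^ t)) := by
  constructor
  · intro t ht
    have ht0 : (0:ℝ) ≤ t := by linarith
    have he : Summable (fun k : ℕ => if k ≤ 6 then (1:ℝ) else 0) :=
      summable_of_ne_finset_zero (s := Finset.range 7)
        (fun k hk => by simp [Finset.mem_range, Nat.lt_succ_iff] at hk ⊢; omega)
    have hh : Summable (fun n : ℕ => (9/4 : ℝ) ^ t * ((n : ℝ) ^ (-(2*t)))) :=
      (Real.summable_nat_rpow.2 (by linarith)).mul_left _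
    have he' : 0 ≤ (fun k : ℕ => if k ≤ 6 then (1:ℝ) else 0) := by
      intro k; dsimp; split <;> norm_num
    have hh' : 0 ≤ (fun n : ℕ => (9/4 : ℝ) ^ t * ((n : ℝ) ^ (-(2*t)))) := by
      intro n; dsimp; positivity
    have hgsum : Summable (fun p : ℕ × ℕ =>
        (if p.1 ≤ 6 then (1:ℝ) else 0) * ((9/4 : ℝ) ^ t * ((p.2 : ℝ) ^ (-(2*t))))) :=
      he.mul_of_nonneg hh he' hh'
    have hsub : Summable (fun p : apolI =>
        (if (p : ℕ × ℕ).1 ≤ 6 then (1:ℝ) else 0) *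
          ((9/4 : ℝ) ^ t * (((p : ℕ × ℕ).2 : ℝ) ^ (-(2*t))))) :=
      hgsum.subtype apolI
    apply Summable.of_nonneg_of_le _ _ hsub
    · intro p
      have hn : 1 ≤ (p : ℕ × ℕ).2 := p.2.2.2
      have hlb := (Dnorm_bounds (p : ℕ × ℕ).1 (p : ℕ × ℕ).2 hn).1
      have hnp : (0:ℝ) < ((p : ℕ × ℕ).2 : ℝ) := by exact_mod_cast hn
      have h9 : (0:ℝ) < 9/(100*((p : ℕ × ℕ).2:ℝ)^2) := by positivity
      exact Real.rpow_nonneg (by linarith) t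
    · intro p
      obtain ⟨hk1, hk6, hn⟩ := p.2
      have hnp : (0:ℝ) < ((p : ℕ × ℕ).2 : ℝ) := by exact_mod_cast hn
      have hub := (Dnorm_bounds (p : ℕ × ℕ).1 (p : ℕ × ℕ).2 hn).2
      have hlb := (Dnorm_bounds (p : ℕ × ℕ).1 (p : ℕ × ℕ).2 hn).1
      have hDpos : (0:ℝ) ≤ Dnorm (p : ℕ × ℕ).1 (p : ℕ × ℕ).2 := by
        have h9 : (0:ℝ) < 9/(100*((p : ℕ × ℕ).2:ℝ)^2) := by positivity
        linarith
      have step1 : Dnorm (p : ℕ × ℕ).1 (p : ℕ × ℕ).2 ^ t ≤ (9/(4*((p : ℕ × ℕ).2:ℝ)^2)) ^ t :=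
        Real.rpow_le_rpow hDpos hub ht0
      have step2 : (9/(4*((p : ℕ × ℕ).2:ℝ)^2) : ℝ) ^ t
          = (9/4 : ℝ) ^ t * ((p : ℕ × ℕ).2 : ℝ) ^ (-(2*t)) := by
        rw [show (9/(4*((p : ℕ × ℕ).2:ℝ)^2) : ℝ) = (9/4) * (((p : ℕ × ℕ).2:ℝ)^2)⁻¹ by
          field_simp]
        rw [Real.mul_rpow (by norm_num) (by positivity)]
        rw [inv_sq_rpow hnp]
      show _ ≤ (if (p : ℕ × ℕ).1 ≤ 6 then (1:ℝ) else 0) *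
          ((9/4 : ℝ) ^ t * (((p : ℕ × ℕ).2 : ℝ) ^ (-(2*t))))
      rw [if_pos hk6, one_mul, ← step2]
      exact step1
  · intro t ht0 ht hsum
    have hs2 : Summable (fun m : ℕ => Dnorm 1 (m+1) ^ t) := by
      have hinj : Function.Injective apolIota := by
        intro a b h
        have h2 : (apolIota a).val.2 = (apolIota b).val.2 := by rw [h]
        simpa [apolIota] using h2
      have h0 := hsum.comp_injective hinj
      exact h0.congr (fun m => by simp [Function.comp, apolIota])
    have hcomp : Summable (fun m : ℕ => (3/10 : ℝ) * (1 / ((m:ℝ)+1))) := by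
      apply Summable.of_nonneg_of_le _ _ hs2
      · intro m; positivity
      · intro m
        have hm1 : (0:ℝ) < ((m+1:ℕ):ℝ) := by positivity
        have hlb := (Dnorm_bounds 1 (m+1) (Nat.succ_le_succ (Nat.zero_le m))).1
        have h9 : (0:ℝ) < 9/(100*((m+1:ℕ):ℝ)^2) := by positivity
        have step1 : (9/(100*((m+1:ℕ):ℝ)^2) : ℝ) ^ t ≤ Dnorm 1 (m+1) ^ t :=
          Real.rpow_le_rpow (le_of_lt h9) hlb ht0
        have step2 : (3/10 : ℝ) * (1 / ((m:ℝ)+1)) ≤ (9/(100*((m+1:ℕ):ℝ)^2) : ℝ) ^ t := by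
          have hx : (9/(100*((m+1:ℕ):ℝ)^2) : ℝ) = (9/100) * (((m+1:ℕ):ℝ)^2)⁻¹ := by field_simp
          rw [hx, Real.mul_rpow (by norm_num) (by positivity), inv_sq_rpow hm1]
          have hA : ((9:ℝ)/100) ^ ((1:ℝ)/2) ≤ ((9:ℝ)/100) ^ t :=
            Real.rpow_le_rpow_of_exponent_ge (by norm_num) (by norm_num) ht
          have hA2 : ((9:ℝ)/100) ^ ((1:ℝ)/2) = 3/10 := by
            rw [show (9:ℝ)/100 = (3/10)^(2:ℕ) by norm_num]
            rw [← Real.rpow_natCast ((3:ℝ)/10) 2, ← Real.rpow_mul (by norm_num)]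
            norm_num
          have hB : (1 / ((m:ℝ)+1)) ≤ (((m+1:ℕ):ℝ)) ^ (-(2*t)) := by
            have h2 : (((m+1:ℕ):ℝ)) ^ (-(1:ℝ)) ≤ (((m+1:ℕ):ℝ)) ^ (-(2*t)) := by
              apply Real.rpow_le_rpow_of_exponent_le (by push_cast; linarith)
              linarith
            calc (1 / ((m:ℝ)+1)) = (((m+1:ℕ):ℝ)) ^ (-(1:ℝ)) := by
                  rw [Real.rpow_neg_one]
                  push_cast
                  rw [one_div]
              _ ≤ _ := h2
          calc (3/10 : ℝ) * (1 / ((m:ℝ)+1))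
              ≤ ((9:ℝ)/100) ^ t * ((((m+1:ℕ):ℝ)) ^ (-(2*t))) := by
                apply mul_le_mul (hA2 ▸ hA) hB (by positivity)
                positivity
            _ = _ := rfl
        linarith
    have hsum15 : Summable (fun m : ℕ => (1:ℝ) / ((m:ℝ)+1)) :=
      (hcomp.mul_left ((10:ℝ)/3)).congr (fun m => by ring)
    have h2 : Summable (fun n : ℕ => (1:ℝ) / (n:ℝ)) := by
      rw [← summable_nat_add_iff 1]
      exact hsum15.congr (fun m => by push_cast; ring)
    exact Real.not_summable_one_div_natCast h2
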